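/- Let G ∈ F_2^{k×(2^k−1)} be a generator matrix of the binary simplex code, whose columns are exactly all nonzero vectors of F_2^k. Then for every column g, there exist 2^{k−1} pairwise disjoint recovery sets for g: the singleton {g} together with 2^{k−1}−1 disjoint pairs {u, u+g} of nonzero vectors. Hence the simplex code is a 2^{k−1}-all-symbol PIR code, and this value of t is maximal. -/

import Mathlib

open Matrix

/-- `G` serves the list of vectors `v` (indexed by `ι`) if there are pairwise disjoint
recovery sets `R i` of column indices with `v i` in the span of the columns indexed by `R i`. -/
def Serves (F : Type*) [Field F] {m n ι : Type*} (G : Matrix m n F) (v : ι → (m → F)) : Prop :=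
  ∃ R : ι → Set n, (Pairwise fun a b => Disjoint (R a) (R b)) ∧
    ∀ i, v i ∈ Submodule.span F ((fun j a => G a j) '' R i)

/-- the `t`-all-symbol PIR property. -/
def ASPIR (F : Type*) [Field F] {m n : Type*} (t : ℕ) (G : Matrix m n F) : Prop :=
  ∀ j : n, Serves F G fun _ : Fin t => fun a => G a j

/-- the `t`-all-symbol batch property. -/
def ASBatch (F : Type*) [Field F] {m n : Type*} (t : ℕ) (G : Matrix m n F) : Prop :=
  ∀ c : Fin t → n, Serves F G fun i => fun a => G a (c i)

/-- generator matrix of the binary simplex code: columns are all nonzero vectors of `F_2^k`. -/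
def simplexG (k : ℕ) : Matrix (Fin k) {v : Fin k → ZMod 2 // v ≠ 0} (ZMod 2) :=
  Matrix.of fun i v => v.1 i

section Aux

variable {k : ℕ}

lemma addself (x : Fin k → ZMod 2) : x + x = 0 := by
  funext i; exact CharTwo.add_self_eq_zero _

lemma addaddself (x y : Fin k → ZMod 2) : x + y + y = x := by
  rw [add_assoc, addself, add_zero]

lemma eq_of_add_eq_zero' {x y : Fin k → ZMod 2} (h : x + y = 0) : x = y := by
  have := congrArg (· + y) h
  simpa [addaddself] using this

lemma card_NZ : Fintype.card {v : Fin k → ZMod 2 // v ≠ 0} = 2 ^ k - 1 := by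
  classical
  rw [Fintype.card_subtype_compl]
  simp [Fintype.card_fun]

lemma key {k : ℕ} (hk : 1 ≤ k) (g : {v : Fin k → ZMod 2 // v ≠ 0}) :
    ∃ R : Fin (2 ^ (k - 1)) → Set {v : Fin k → ZMod 2 // v ≠ 0},
      (Pairwise fun a b => Disjoint (R a) (R b)) ∧
      R 0 = {g} ∧
      (∀ i, i ≠ 0 → ∃ u v : {v : Fin k → ZMod 2 // v ≠ 0},
        u ≠ v ∧ u.1 + v.1 = g.1 ∧ R i = {u, v}) ∧
      ∀ i, g.1 ∈ Submodule.span (ZMod 2)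
        ((fun j a => simplexG k a j) '' R i) := by
  classical
  -- the involution u ↦ u + g on the nonzero vectors different from g
  let σ : {u : {v : Fin k → ZMod 2 // v ≠ 0} // u ≠ g} →
      {u : {v : Fin k → ZMod 2 // v ≠ 0} // u ≠ g} := fun u =>
    ⟨⟨u.1.1 + g.1, fun h => u.2 (Subtype.ext (eq_of_add_eq_zero' h))⟩,
      fun h => u.1.2 (by
        have h2 : u.1.1 + g.1 = g.1 := congrArg Subtype.val h
        rwa [add_eq_right] at h2)⟩
  have hσval : ∀ u, (σ u).1.1 = u.1.1 + g.1 := fun u => rfl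
  have hσσ : ∀ u, σ (σ u) = u := by
    intro u
    apply Subtype.ext; apply Subtype.ext
    rw [hσval, hσval, addaddself]
  have hσne : ∀ u, σ u ≠ u := by
    intro u h
    apply g.2
    have h1 : u.1.1 + g.1 = u.1.1 := congrArg (fun x => x.1.1) h
    rwa [add_eq_left] at h1
  have hσinj : Function.Injective σ := fun a b h => by
    rw [← hσσ a, h, hσσ]
  -- enumeration
  let enc := Fintype.equivFin {u : {v : Fin k → ZMod 2 // v ≠ 0} // u ≠ g}
  let L := {u : {u : {v : Fin k → ZMod 2 // v ≠ 0} // u ≠ g} // enc u < enc (σ u)}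
  let L' := {u : {u : {v : Fin k → ZMod 2 // v ≠ 0} // u ≠ g} // ¬ enc u < enc (σ u)}
  have eLL' : L ≃ L' := by
    refine ⟨fun u => ⟨σ u.1, ?_⟩, fun u => ⟨σ u.1, ?_⟩, ?_, ?_⟩
    · rw [hσσ]; exact fun h => absurd (lt_trans u.2 h) (lt_irrefl _)
    · rcases lt_or_gt_of_ne (fun h : enc (σ u.1) = enc u.1 => hσne u.1 (enc.injective h)) with h | h
      · rw [hσσ]; exact h
      · exact absurd h u.2
    · intro u; exact Subtype.ext (hσσ u.1)
    · intro u; exact Subtype.ext (hσσ u.1)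
  have cardS : Fintype.card {u : {v : Fin k → ZMod 2 // v ≠ 0} // u ≠ g} = 2 ^ k - 2 := by
    rw [Fintype.card_subtype_compl, Fintype.card_subtype_eq, card_NZ]
    omega
  have cardL : Fintype.card L = 2 ^ (k - 1) - 1 := by
    have h1 : Fintype.card L' =
        Fintype.card {u : {v : Fin k → ZMod 2 // v ≠ 0} // u ≠ g} - Fintype.card L :=
      Fintype.card_subtype_compl _
    have h2 : Fintype.card L = Fintype.card L' := Fintype.card_congr eLL'
    have h3 : Fintype.card L ≤ Fintype.card {u : {v : Fin k → ZMod 2 // v ≠ 0} // u ≠ g} :=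
      Fintype.card_subtype_le _
    have h4 : 2 ^ k = 2 * 2 ^ (k - 1) := by
      conv_lhs => rw [show k = (k - 1) + 1 by omega]
      ring
    omega
  have cardI : Fintype.card {i : Fin (2 ^ (k - 1)) // i ≠ 0} = 2 ^ (k - 1) - 1 := by
    rw [Fintype.card_subtype_compl, Fintype.card_subtype_eq]
    simp
  let e : {i : Fin (2 ^ (k - 1)) // i ≠ 0} ≃ L :=
    Fintype.equivOfCardEq (by rw [cardI, cardL])
  -- the recovery sets
  refine ⟨fun i => if h : i = 0 then {g} else
      {(e ⟨i, h⟩).1.1, (σ (e ⟨i, h⟩).1).1}, ?_, ?_, ?_, ?_⟩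
  · -- pairwise disjoint
    have hpair : ∀ (x y : L), x ≠ y →
        x.1.1 ≠ y.1.1 ∧ x.1.1 ≠ (σ y.1).1 ∧ (σ x.1).1 ≠ y.1.1 ∧ (σ x.1).1 ≠ (σ y.1).1 := by
      intro x y hxy
      refine ⟨?_, ?_, ?_, ?_⟩
      · intro h; exact hxy (Subtype.ext (Subtype.ext h))
      · intro h
        have hx : x.1 = σ y.1 := Subtype.ext h
        have hlt : enc x.1 < enc (σ x.1) := x.2
        rw [hx, hσσ] at hlt
        exact absurd (lt_trans y.2 hlt) (lt_irrefl _)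
      · intro h
        have hx : σ x.1 = y.1 := Subtype.ext h
        have hlt : enc y.1 < enc (σ y.1) := y.2
        rw [← hx, hσσ] at hlt
        exact absurd (lt_trans x.2 hlt) (lt_irrefl _)
      · intro h
        exact hxy (Subtype.ext (hσinj (Subtype.ext h)))
    have hgpair : ∀ (x : L), x.1.1 ≠ g ∧ (σ x.1).1 ≠ g := fun x => ⟨x.1.2, (σ x.1).2⟩
    intro a b hab
    by_cases ha : a = 0 <;> by_cases hb : b = 0
    · exact absurd (ha.trans hb.symm) hab
    · subst ha
      simp only [dif_pos rfl, dif_neg hb]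
      rw [Set.disjoint_left]
      intro x hx hmem
      have hx' : x = g := hx
      rcases hmem with h | h
      · exact (hgpair (e ⟨b, hb⟩)).1 (h.symm.trans hx')
      · exact (hgpair (e ⟨b, hb⟩)).2 (h.symm.trans hx')
    · subst hb
      simp only [dif_pos rfl, dif_neg ha]
      rw [Set.disjoint_right]
      intro x hx hmem
      have hx' : x = g := hx
      rcases hmem with h | h
      · exact (hgpair (e ⟨a, ha⟩)).1 (h.symm.trans hx')
      · exact (hgpair (e ⟨a, ha⟩)).2 (h.symm.trans hx')
    · simp only [dif_neg ha, dif_neg hb]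
      have hne : e ⟨a, ha⟩ ≠ e ⟨b, hb⟩ := fun h =>
        hab (congrArg Subtype.val (e.injective h) : a = b)
      obtain ⟨h1, h2, h3, h4⟩ := hpair _ _ hne
      rw [Set.disjoint_left]
      rintro x (rfl | rfl) (h | h)
      · exact h1 h
      · exact h2 h
      · exact h3 h
      · exact h4 h
  · beta_reduce
    exact dif_pos rfl
  · intro i hi
    refine ⟨(e ⟨i, hi⟩).1.1, (σ (e ⟨i, hi⟩).1).1, ?_, ?_, ?_⟩
    · intro h; exact hσne _ (Subtype.ext h.symm)
    · rw [hσval, ← add_assoc, addself, zero_add]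
    · beta_reduce
      exact dif_neg hi
  · intro i
    have hcol : ∀ (u : {v : Fin k → ZMod 2 // v ≠ 0}) (S : Set {v : Fin k → ZMod 2 // v ≠ 0}),
        u ∈ S → u.1 ∈ Submodule.span (ZMod 2) ((fun j a => simplexG k a j) '' S) := by
      intro u S hu
      exact Submodule.subset_span ⟨u, hu, rfl⟩
    beta_reduce
    by_cases h : i = 0
    · rw [dif_pos h]
      exact hcol g {g} rfl
    · rw [dif_neg h]
      have h1 := hcol (e ⟨i, h⟩).1.1 _ (Set.mem_insert _ {(σ (e ⟨i, h⟩).1).1})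
      have h2 := hcol (σ (e ⟨i, h⟩).1).1 {(e ⟨i, h⟩).1.1, (σ (e ⟨i, h⟩).1).1}
        (Set.mem_insert_of_mem _ rfl)
      have hsum := Submodule.add_mem _ h1 h2
      rwa [show (e ⟨i, h⟩).1.1.1 + (σ (e ⟨i, h⟩).1).1.1 = g.1 by
        rw [hσval, ← add_assoc, addself, zero_add]] at hsum

end Aux

theorem stmt13 {k : ℕ} (hk : 1 ≤ k) :
    (∀ g : {v : Fin k → ZMod 2 // v ≠ 0},
      ∃ R : Fin (2 ^ (k - 1)) → Set {v : Fin k → ZMod 2 // v ≠ 0},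
        (Pairwise fun a b => Disjoint (R a) (R b)) ∧
        R 0 = {g} ∧
        (∀ i, i ≠ 0 → ∃ u v : {v : Fin k → ZMod 2 // v ≠ 0},
          u ≠ v ∧ u.1 + v.1 = g.1 ∧ R i = {u, v}) ∧
        ∀ i, g.1 ∈ Submodule.span (ZMod 2)
          ((fun j a => simplexG k a j) '' R i)) ∧
    ASPIR (ZMod 2) (2 ^ (k - 1)) (simplexG k) ∧
    ∀ t : ℕ, ASPIR (ZMod 2) t (simplexG k) → t ≤ 2 ^ (k - 1) := by
  refine ⟨fun g => key hk g, ?_, ?_⟩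
  · intro j
    obtain ⟨R, hdisj, -, -, hspan⟩ := key hk j
    exact ⟨R, hdisj, fun i => hspan i⟩
  · intro t ht
    classical
    have hg : (fun _ : Fin k => (1 : ZMod 2)) ≠ 0 := by
      intro h
      have h0 := congrFun h ⟨0, hk⟩
      simp at h0
    set gN : {v : Fin k → ZMod 2 // v ≠ 0} := ⟨fun _ => 1, hg⟩ with hgN
    obtain ⟨R, hdisj, hspan⟩ := ht gN
    have hspan' : ∀ i : Fin t, gN.1 ∈ Submodule.span (ZMod 2)
        ((fun (j : {v : Fin k → ZMod 2 // v ≠ 0}) a => simplexG k a j) '' R i) :=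
      fun i => hspan i
    -- each recovery set is nonempty
    have hne : ∀ i : Fin t, (R i).Nonempty := by
      intro i
      by_contra h
      rw [Set.not_nonempty_iff_eq_empty] at h
      have := hspan' i
      rw [h, Set.image_empty, Submodule.span_empty, Submodule.mem_bot] at this
      exact hg this
    -- recovery sets not containing gN have at least two elements
    have htwo : ∀ i : Fin t, gN ∉ R i → 2 ≤ (R i).toFinset.card := by
      intro i hgi
      by_contra hcard
      push_neg at hcard
      obtain ⟨v, hv⟩ := hne i
      have hone : ∀ x ∈ R i, x = v := by
        intro x hx
        exact Finset.card_le_one.mp (by omega) x (Set.mem_toFinset.mpr hx) v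
          (Set.mem_toFinset.mpr hv)
      have hsub : ((fun (j : {v : Fin k → ZMod 2 // v ≠ 0}) a => simplexG k a j) '' R i)
          ⊆ {v.1} := by
        rintro x ⟨u, hu, rfl⟩
        rw [hone u hu]
        rfl
      have hmem := Submodule.span_mono hsub (hspan' i)
      rw [Submodule.mem_span_singleton] at hmem
      have hZ : ∀ a : ZMod 2, a = 0 ∨ a = 1 := by decide
      obtain ⟨a, ha⟩ := hmem
      rcases hZ a with rfl | rfl
      · rw [zero_smul] at ha
        exact hg ha.symm
      · rw [one_smul] at ha
        exact hgi (by rwa [show v = gN from Subtype.ext ha] at hv)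
    -- at most one recovery set contains gN
    set A := Finset.univ.filter (fun i : Fin t => gN ∈ R i) with hA
    have hAcard : A.card ≤ 1 := by
      rw [Finset.card_le_one]
      intro i hi j hj
      by_contra hij
      rw [Finset.mem_filter] at hi hj
      exact Set.disjoint_left.mp (hdisj hij) hi.2 hj.2
    -- lower bound for the sum of cardinalities
    have hlow : ∀ i : Fin t, (if gN ∈ R i then 1 else 2) ≤ (R i).toFinset.card := by
      intro i
      split
      · exact Finset.card_pos.mpr (Set.toFinset_nonempty.mpr (hne i))
      · exact htwo i (by assumption)
    have hsum1 : ∑ i : Fin t, (if gN ∈ R i then 1 else 2) + A.card = 2 * t := by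
      rw [hA, Finset.card_filter, ← Finset.sum_add_distrib]
      have : ∀ i : Fin t, ((if gN ∈ R i then 1 else 2) + if gN ∈ R i then 1 else 0) = 2 := by
        intro i; split <;> rfl
      rw [Finset.sum_congr rfl fun i _ => this i, Finset.sum_const, Finset.card_univ,
        Fintype.card_fin, smul_eq_mul, mul_comm]
    -- upper bound via disjointness
    have hup : ∑ i : Fin t, (R i).toFinset.card ≤ 2 ^ k - 1 := by
      rw [← Finset.card_biUnion (fun i _ j _ hij =>
        Set.disjoint_toFinset.mpr (hdisj hij))]
      calc (Finset.univ.biUnion fun i => (R i).toFinset).card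
          ≤ Fintype.card {v : Fin k → ZMod 2 // v ≠ 0} := Finset.card_le_univ _
        _ = 2 ^ k - 1 := card_NZ
    have hsum2 : ∑ i : Fin t, (if gN ∈ R i then 1 else 2) ≤ 2 ^ k - 1 :=
      le_trans (Finset.sum_le_sum fun i _ => hlow i) hup
    have h4 : 2 ^ k = 2 * 2 ^ (k - 1) := by
      conv_lhs => rw [show k = (k - 1) + 1 by omega]
      ring
    have hpos : 1 ≤ 2 ^ k := Nat.one_le_two_pow
    omega
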